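/- arXiv:1710.06962 — 2 statements merged into one kernel-verified Lean document; each statement's English description precedes it below -/
import Mathlib

section
/- Let F be a CM number field with maximal totally real subfield F₀, nontrivial F₀-automorphism σ, and Nm(z) := z·σ(z). Let J♭ be an invertible hermitian (n−1)×(n−1) matrix over F, let c₀ ∈ F₀^× and let J := diag(J♭, c₀) be the n × n block-diagonal hermitian matrix (corresponding to an orthogonal decomposition W = W♭ ⊕ F·u with (u,u) = c₀). Define H := {h ∈ GL_{n−1}(F) | hᴴ J♭ h = J♭}, G := {g ∈ GL_n(F) | gᴴ J g = J}, the similitude groups H^ℚ := {h | hᴴ J♭ h = c(h)·J♭, c(h) ∈ ℚ^×} and G^ℚ := {g | gᴴ J g = c(g)·J, c(g) ∈ ℚ^×}, Z^ℚ := {z ∈ F^× | Nm(z) ∈ ℚ^×}, and the fiber products H̃ := {(z, h) ∈ Z^ℚ × H^ℚ | Nm(z) = c(h)} and G̃ := {(z, g) ∈ Z^ℚ × G^ℚ | Nm(z) = c(g)}. Then: (i) (z, h) ↦ (z, diag(h, z)) is an injective group homomorphism H̃ → G̃, and h ↦ diag(h, 1) is an injective group homomorphism H → G; (ii) the map (z,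 g) ↦ z^{−1}g induces a bijection of left coset spaces G̃/H̃ ≅ G/H; (iii) setting G̃_W := {(z, h, g) ∈ Z^ℚ × H^ℚ × G^ℚ | Nm(z) = c(h) = c(g)} with H̃ embedded via (z, h) ↦ (z, h, diag(h, z)), the map (z, h, g) ↦ (z^{−1}h, z^{−1}g) induces a bijection of double coset spaces H̃\G̃_W/H̃ ≅ H\(H × G)/H, where H is embedded in H × G via h ↦ (h, diag(h, 1)). (This is Lemma 2.2 of the paper at the level of rational points.) -/
open Matrix

/-- The σ-conjugate transpose of a matrix. -/
def conjTr {F : Type*} [Field F] {ι : Type*} (σ : F → F) (g : Matrix ι ι F) :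
    Matrix ι ι F :=
  (g.map σ)ᵀ

/-- `diag(h, z)`: the `(m+1) × (m+1)` block diagonal matrix with blocks `h` and `z`. -/
def diagBlock {F : Type*} [Field F] {m : ℕ} (h : Matrix (Fin m) (Fin m) F) (z : F) :
    Matrix (Fin m ⊕ Unit) (Fin m ⊕ Unit) F :=
  Matrix.fromBlocks h 0 0 (Matrix.of fun _ _ => z)

/-- The rational points of `Z^ℚ`: elements of `F^×` whose norm `z * σ z` lies in `ℚ^×`. -/
def ZQPoints {F : Type*} [Field F] (σ : F → F) : Set F :=
  {z | z ≠ 0 ∧ ∃ q : ℚ, q ≠ 0 ∧ z * σ z = (q : F)}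

/-- The unitary group of the hermitian matrix `J`. -/
def UnitaryPoints {F : Type*} [Field F] {ι : Type*} [Fintype ι] (σ : F → F)
    (J : Matrix ι ι F) : Set (Matrix ι ι F) :=
  {g | conjTr σ g * J * g = J}

/-- The unitary similitude group of `J` with rational similitude factor. -/
def GUQPoints {F : Type*} [Field F] {ι : Type*} [Fintype ι] (σ : F → F)
    (J : Matrix ι ι F) : Set (Matrix ι ι F) :=
  {g | ∃ c : ℚ, c ≠ 0 ∧ conjTr σ g * J * g = (c : F) • J}

/-- The fiber product `Z^ℚ ×_{𝔾_m} GU(J)^ℚ` (this is `H̃` for `J = J♭`, resp. `G̃` for `J`):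
pairs `(z, g)` with `z ∈ Z^ℚ`, `g` a rational similitude of `J`, and `Nm z = c(g)`. -/
def TildePoints {F : Type*} [Field F] {ι : Type*} [Fintype ι] (σ : F → F)
    (J : Matrix ι ι F) : Set (F × Matrix ι ι F) :=
  {p | p.1 ≠ 0 ∧ ∃ c : ℚ, c ≠ 0 ∧ p.1 * σ p.1 = (c : F) ∧
    conjTr σ p.2 * J * p.2 = (c : F) • J}

/-- `G̃_W = Z^ℚ ×_{𝔾_m} H^ℚ ×_{𝔾_m} G^ℚ`: triples `(z, h, g)` with `z ∈ Z^ℚ` and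
`Nm z = c(h) = c(g)`. -/
def TildeHGPoints {F : Type*} [Field F] {m : ℕ} (σ : F → F)
    (Jb : Matrix (Fin m) (Fin m) F) (J : Matrix (Fin m ⊕ Unit) (Fin m ⊕ Unit) F) :
    Set (F × Matrix (Fin m) (Fin m) F × Matrix (Fin m ⊕ Unit) (Fin m ⊕ Unit) F) :=
  {p | p.1 ≠ 0 ∧ ∃ c : ℚ, c ≠ 0 ∧ p.1 * σ p.1 = (c : F) ∧
    conjTr σ p.2.1 * Jb * p.2.1 = (c : F) • Jb ∧
    conjTr σ p.2.2 * J * p.2.2 = (c : F) • J}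

/-- The embedding `H̃ → G̃`, `(z, h) ↦ (z, diag(h, z))`. -/
def embTilde {F : Type*} [Field F] {m : ℕ} (p : F × Matrix (Fin m) (Fin m) F) :
    F × Matrix (Fin m ⊕ Unit) (Fin m ⊕ Unit) F :=
  (p.1, diagBlock p.2 p.1)

/-- The embedding `H → G`, `h ↦ diag(h, 1)`. -/
def embU {F : Type*} [Field F] {m : ℕ} (h : Matrix (Fin m) (Fin m) F) :
    Matrix (Fin m ⊕ Unit) (Fin m ⊕ Unit) F :=
  diagBlock h 1

/-- The embedding `H̃ → G̃_W`, `(z, h) ↦ (z, h, diag(h, z))`. -/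
def embTildeHG {F : Type*} [Field F] {m : ℕ} (p : F × Matrix (Fin m) (Fin m) F) :
    F × Matrix (Fin m) (Fin m) F × Matrix (Fin m ⊕ Unit) (Fin m ⊕ Unit) F :=
  (p.1, p.2, diagBlock p.2 p.1)

/-- The projection `G̃ → G`, `(z, g) ↦ z⁻¹ • g` (cf. Lemma 2.2 of the paper). -/
def projU {F : Type*} [Field F] {ι : Type*} (p : F × Matrix ι ι F) : Matrix ι ι F :=
  p.1⁻¹ • p.2

/-- The projection `G̃_W → H × G`, `(z, h, g) ↦ (z⁻¹ • h, z⁻¹ • g)`. -/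
def projHG {F : Type*} [Field F] {m : ℕ}
    (p : F × Matrix (Fin m) (Fin m) F × Matrix (Fin m ⊕ Unit) (Fin m ⊕ Unit) F) :
    Matrix (Fin m) (Fin m) F × Matrix (Fin m ⊕ Unit) (Fin m ⊕ Unit) F :=
  (p.1⁻¹ • p.2.1, p.1⁻¹ • p.2.2)

/-- The embedding `H → H × G`, `h ↦ (h, diag(h, 1))`. -/
def embHtoHG {F : Type*} [Field F] {m : ℕ} (h : Matrix (Fin m) (Fin m) F) :
    Matrix (Fin m) (Fin m) F × Matrix (Fin m ⊕ Unit) (Fin m ⊕ Unit) F :=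
  (h, diagBlock h 1)

section aux
variable {F₀ F : Type*} [Field F₀] [Field F] [Algebra F₀ F] {m : ℕ}
variable (σ : F ≃ₐ[F₀] F)

lemma conjTr_mul' {ι : Type*} [Fintype ι] (A B : Matrix ι ι F) :
    conjTr (⇑σ) (A * B) = conjTr (⇑σ) B * conjTr (⇑σ) A := by
  ext i j
  simp [conjTr, Matrix.mul_apply, map_sum, _root_.map_mul, mul_comm]

lemma conjTr_smul' {ι : Type*} (a : F) (A : Matrix ι ι F) :
    conjTr (⇑σ) (a • A) = σ a • conjTr (⇑σ) A := by
  ext i j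
  simp [conjTr, _root_.map_mul, mul_comm]

lemma conjTr_diagBlock' (h : Matrix (Fin m) (Fin m) F) (z : F) :
    conjTr (⇑σ) (diagBlock h z) = diagBlock (conjTr (⇑σ) h) (σ z) := by
  ext i j
  cases i <;> cases j <;> simp [conjTr, diagBlock]

lemma diagBlock_mul {F : Type*} [Field F] {m : ℕ} (h h' : Matrix (Fin m) (Fin m) F) (z z' : F) :
    diagBlock h z * diagBlock h' z' = diagBlock (h * h') (z * z') := by
  ext i j
  cases i <;> cases j <;>
    simp [diagBlock, Matrix.mul_apply, Fintype.sum_sum_type]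

lemma smul_diagBlock {F : Type*} [Field F] {m : ℕ} (a : F) (h : Matrix (Fin m) (Fin m) F) (z : F) :
    a • diagBlock h z = diagBlock (a • h) (a * z) := by
  ext i j
  cases i <;> cases j <;> simp [diagBlock]

lemma diagBlock_inj {F : Type*} [Field F] {m : ℕ} {h h' : Matrix (Fin m) (Fin m) F} {z z' : F}
    (H : diagBlock h z = diagBlock h' z') : h = h' := by
  ext i j
  have := congrFun (congrFun H (Sum.inl i)) (Sum.inl j)
  simpa [diagBlock] using this

end aux
section aux2
variable {F₀ F : Type*} [Field F₀] [Field F] [Algebra F₀ F] {m : ℕ}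
variable (σ : F ≃ₐ[F₀] F)

lemma sim_smul {ι : Type*} [Fintype ι] (Jm : Matrix ι ι F) {A : Matrix ι ι F} {d : F}
    (hA : conjTr (⇑σ) A * Jm * A = d • Jm) (w : F) :
    conjTr (⇑σ) (w • A) * Jm * (w • A) = (σ w * w * d) • Jm := by
  rw [conjTr_smul', smul_mul_assoc, smul_mul_assoc, mul_smul_comm, hA, smul_smul, smul_smul,
    mul_assoc]

lemma unitary_of_sim {ι : Type*} [Fintype ι] (Jm : Matrix ι ι F) {A : Matrix ι ι F} {z c : F}
    (hz : z ≠ 0) (hnorm : z * σ z = c) (hA : conjTr (⇑σ) A * Jm * A = c • Jm) :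
    conjTr (⇑σ) (z⁻¹ • A) * Jm * (z⁻¹ • A) = Jm := by
  have hσz : σ z ≠ 0 := fun h => hz (by simpa using congrArg (⇑σ.symm) h)
  have h1 : σ z⁻¹ * z⁻¹ * c = 1 := by
    rw [map_inv₀, ← hnorm]
    field_simp
  rw [sim_smul σ Jm hA, h1, one_smul]

lemma smul_eq_of_inv_smul_eq {M : Type*} [AddCommMonoid M] [Module F M] {z : F}
    (hz : z ≠ 0) {x : M} {y : M} (h : z⁻¹ • x = y) : x = z • y := by
  rw [← h, smul_smul, mul_inv_cancel₀ hz, one_smul]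

end aux2
/-- Lemma 2.2 of the paper at the level of rational points.
Let `F/F₀` be a CM field with automorphism `σ`, `J♭` an invertible hermitian `m × m`
("`(n-1) × (n-1)`") matrix over `F`, `c₀ ∈ F₀^×` and `J := diag(J♭, c₀)` (corresponding to
`W = W♭ ⊕ F·u` with `(u, u) = c₀`).  Then:
(i) `(z, h) ↦ (z, diag(h, z))` is an injective group homomorphism `H̃ → G̃` and
`h ↦ diag(h, 1)` is an injective group homomorphism `H → G`;
(ii) `(z, g) ↦ z⁻¹ g` induces a bijection of left coset spaces `G̃/H̃ ≅ G/H`;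
(iii) `(z, h, g) ↦ (z⁻¹ h, z⁻¹ g)` induces a bijection of double coset spaces
`H̃\G̃_W/H̃ ≅ H\(H × G)/H`, where `H̃` is embedded in `G̃_W` via `(z, h) ↦ (z, h, diag(h, z))`
and `H` is embedded in `H × G` via `h ↦ (h, diag(h, 1))`. -/
theorem tilde_embeddings_and_coset_matching
    (F₀ F : Type*) [Field F₀] [Field F] [Algebra F₀ F]
    [NumberField F₀] [NumberField F]
    -- `F₀` is totally real
    (htotreal : ∀ (φ : F₀ →+* ℂ) (x : F₀), (φ x).im = 0)
    -- `F` is totally imaginary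
    (htotimag : ∀ φ : F →+* ℂ, ∃ x : F, (φ x).im ≠ 0)
    -- `F` is a quadratic extension of `F₀`
    (hquad : Module.finrank F₀ F = 2)
    -- `σ` is the nontrivial `F₀`-automorphism of `F/F₀` (an involution)
    (σ : F ≃ₐ[F₀] F) (hσ : σ ≠ AlgEquiv.refl) (hσ2 : ∀ x : F, σ (σ x) = x)
    (m : ℕ) (Jb : Matrix (Fin m) (Fin m) F)
    (hJbherm : conjTr (⇑σ) Jb = Jb) (hJbdet : Jb.det ≠ 0)
    (c₀ : F₀) (hc₀ : c₀ ≠ 0)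
    (J : Matrix (Fin m ⊕ Unit) (Fin m ⊕ Unit) F)
    (hJdef : J = Matrix.fromBlocks Jb 0 0 (Matrix.of fun _ _ => algebraMap F₀ F c₀)) :
    -- (i) injective group homomorphisms `H̃ → G̃` and `H → G`
    (Set.MapsTo embTilde (TildePoints (⇑σ) Jb) (TildePoints (⇑σ) J) ∧
      Set.InjOn embTilde (TildePoints (⇑σ) Jb) ∧
      (∀ p ∈ TildePoints (⇑σ) Jb, ∀ q ∈ TildePoints (⇑σ) Jb,
        embTilde (p * q) = embTilde p * embTilde q) ∧
      Set.MapsTo embU (UnitaryPoints (⇑σ) Jb) (UnitaryPoints (⇑σ) J) ∧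
      Set.InjOn embU (UnitaryPoints (⇑σ) Jb) ∧
      (∀ h ∈ UnitaryPoints (⇑σ) Jb, ∀ h' ∈ UnitaryPoints (⇑σ) Jb,
        embU (h * h') = embU h * embU h')) ∧
    -- (ii) `(z, g) ↦ z⁻¹ • g` induces a bijection `G̃/H̃ ≅ G/H`
    ((∀ p ∈ TildePoints (⇑σ) J, projU p ∈ UnitaryPoints (⇑σ) J) ∧
      (∀ g ∈ UnitaryPoints (⇑σ) J, ∃ p ∈ TildePoints (⇑σ) J, projU p = g) ∧
      (∀ p ∈ TildePoints (⇑σ) J, ∀ p' ∈ TildePoints (⇑σ) J,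
        ((∃ q ∈ TildePoints (⇑σ) Jb, p' = p * embTilde q) ↔
          (∃ h ∈ UnitaryPoints (⇑σ) Jb, projU p' = projU p * embU h)))) ∧
    -- (iii) `(z, h, g) ↦ (z⁻¹ • h, z⁻¹ • g)` induces a bijection `H̃\G̃_W/H̃ ≅ H\(H×G)/H`
    ((∀ q ∈ TildePoints (⇑σ) Jb, embTildeHG q ∈ TildeHGPoints (⇑σ) Jb J) ∧
      (∀ p ∈ TildeHGPoints (⇑σ) Jb J,
        projHG p ∈ UnitaryPoints (⇑σ) Jb ×ˢ UnitaryPoints (⇑σ) J) ∧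
      (∀ x ∈ UnitaryPoints (⇑σ) Jb ×ˢ UnitaryPoints (⇑σ) J,
        ∃ p ∈ TildeHGPoints (⇑σ) Jb J, projHG p = x) ∧
      (∀ p ∈ TildeHGPoints (⇑σ) Jb J, ∀ p' ∈ TildeHGPoints (⇑σ) Jb J,
        ((∃ q ∈ TildePoints (⇑σ) Jb, ∃ q' ∈ TildePoints (⇑σ) Jb,
            p' = embTildeHG q * p * embTildeHG q') ↔
          (∃ h ∈ UnitaryPoints (⇑σ) Jb, ∃ h' ∈ UnitaryPoints (⇑σ) Jb,
            projHG p' = embHtoHG h * projHG p * embHtoHG h')))) := by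
  have hJ : J = diagBlock Jb (algebraMap F₀ F c₀) := hJdef
  have hσne : ∀ x : F, x ≠ 0 → σ x ≠ 0 := fun x hx h =>
    hx (by simpa using congrArg (⇑σ.symm) h)
  have diagSim : ∀ (h : Matrix (Fin m) (Fin m) F) (z e : F), z * σ z = e →
      conjTr (⇑σ) h * Jb * h = e • Jb →
      conjTr (⇑σ) (diagBlock h z) * J * diagBlock h z = e • J := by
    intro h z e hnorm hh
    rw [hJ, conjTr_diagBlock', diagBlock_mul, diagBlock_mul, smul_diagBlock, hh]
    congr 1
    rw [← hnorm]; ring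
  -- norm of a quotient
  have normDiv : ∀ (z z' : F) (c c' : ℚ), z ≠ 0 → z * σ z = (c : F) → z' * σ z' = (c' : F) →
      c ≠ 0 → z' / z * σ (z' / z) = ((c' / c : ℚ) : F) := by
    intro z z' c c' hz hn hn' hc
    have hσz : σ z ≠ 0 := hσne z hz
    rw [map_div₀]
    push_cast
    rw [← hn, ← hn']
    field_simp
  have simDiv : ∀ {ι : Type} [Fintype ι] (Jm : Matrix ι ι F) (A : Matrix ι ι F)
      (z z' : F) (c c' : ℚ), z ≠ 0 → z * σ z = (c : F) → z' * σ z' = (c' : F) → c ≠ 0 →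
      conjTr (⇑σ) A * Jm * A = Jm →
      conjTr (⇑σ) ((z' / z) • A) * Jm * ((z' / z) • A) = ((c' / c : ℚ) : F) • Jm := by
    intro ι _ Jm A z z' c c' hz hn hn' hc hA
    have := sim_smul σ Jm (show conjTr (⇑σ) A * Jm * A = (1 : F) • Jm by
      rw [one_smul]; exact hA) (z' / z)
    rw [this]
    congr 1
    rw [mul_one, mul_comm]
    exact normDiv z z' c c' hz hn hn' hc
  -- (i)
  have mapsTilde : Set.MapsTo embTilde (TildePoints (⇑σ) Jb) (TildePoints (⇑σ) J) := by
    rintro ⟨z, h⟩ ⟨hz, c, hc, hnorm, hh⟩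
    exact ⟨hz, c, hc, hnorm, diagSim h z _ hnorm hh⟩
  refine ⟨⟨mapsTilde, ?_, ?_, ?_, ?_, ?_⟩, ⟨?_, ?_, ?_⟩, ⟨?_, ?_, ?_, ?_⟩⟩
  · intro p _ q _ hpq
    have h1 := congrArg Prod.fst hpq
    have h2 := congrArg Prod.snd hpq
    exact Prod.ext h1 (diagBlock_inj h2)
  · intro p _ q _
    exact Prod.ext rfl (diagBlock_mul p.2 q.2 p.1 q.1).symm
  · intro h hh
    have hh' : conjTr (⇑σ) h * Jb * h = Jb := hh
    show conjTr (⇑σ) (diagBlock h 1) * J * diagBlock h 1 = J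
    rw [hJ, conjTr_diagBlock', diagBlock_mul, diagBlock_mul, hh']
    congr 1
    simp
  · intro p _ q _ hpq
    exact diagBlock_inj hpq
  · intro h _ h' _
    show diagBlock (h * h') 1 = diagBlock h 1 * diagBlock h' 1
    rw [diagBlock_mul, mul_one]
  · -- (ii) projU maps
    rintro ⟨z, g⟩ ⟨hz, c, hc, hnorm, hg⟩
    exact unitary_of_sim σ J hz hnorm hg
  · -- (ii) projU surjective
    intro g hg
    refine ⟨(1, g), ⟨one_ne_zero, 1, one_ne_zero, by simp, ?_⟩, by simp [projU]⟩
    have hg' : conjTr (⇑σ) g * J * g = J := hg; simpa using hg'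
  · -- (ii) coset condition
    rintro ⟨z, g⟩ ⟨hz, c, hc, hnorm, hg⟩ ⟨z', g'⟩ ⟨hz', c', hc', hnorm', hg'⟩
    constructor
    · rintro ⟨⟨w, k⟩, ⟨hw, d, hd, hnormq, hk⟩, heq⟩
      refine ⟨w⁻¹ • k, unitary_of_sim σ Jb hw hnormq hk, ?_⟩
      rw [heq]
      show (z * w)⁻¹ • (g * diagBlock k w) = (z⁻¹ • g) * diagBlock (w⁻¹ • k) 1
      rw [show diagBlock (w⁻¹ • k) 1 = w⁻¹ • diagBlock k w by
            rw [smul_diagBlock, inv_mul_cancel₀ hw]]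
      simp only [smul_mul_assoc, mul_smul_comm, smul_smul, mul_inv]
      congr 1
      ring
    · rintro ⟨h, hh, hEq⟩
      have hh' : conjTr (⇑σ) h * Jb * h = Jb := hh
      refine ⟨(z' / z, (z' / z) • h), ⟨div_ne_zero hz' hz, c' / c, div_ne_zero hc' hc,
        normDiv z z' c c' hz hnorm hnorm' hc,
        simDiv Jb h z z' c c' hz hnorm hnorm' hc hh'⟩, ?_⟩
      have h2 : g' = z' • ((z⁻¹ • g) * diagBlock h 1) :=
        smul_eq_of_inv_smul_eq hz' (hEq : z'⁻¹ • g' = (z⁻¹ • g) * diagBlock h 1)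
      refine Prod.ext ?_ ?_
      · show z' = z * (z' / z)
        field_simp
      · show g' = g * diagBlock ((z' / z) • h) (z' / z)
        rw [h2, show diagBlock ((z' / z) • h) (z' / z) = (z' / z) • diagBlock h 1 by
              rw [smul_diagBlock, mul_one]]
        simp only [smul_mul_assoc, mul_smul_comm, smul_smul]
        congr 1
        field_simp
  · -- (iii) embTildeHG maps
    rintro ⟨z, h⟩ ⟨hz, c, hc, hnorm, hh⟩
    exact ⟨hz, c, hc, hnorm, hh, diagSim h z _ hnorm hh⟩
  · -- (iii) projHG maps
    rintro ⟨z, h, g⟩ ⟨hz, c, hc, hnorm, hh, hg⟩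
    exact ⟨unitary_of_sim σ Jb hz hnorm hh, unitary_of_sim σ J hz hnorm hg⟩
  · -- (iii) projHG surjective
    rintro ⟨h, g⟩ ⟨hh, hg⟩
    refine ⟨(1, h, g), ⟨one_ne_zero, 1, one_ne_zero, by simp, ?_, ?_⟩, by simp [projHG]⟩
    · have hh' : conjTr (⇑σ) h * Jb * h = Jb := hh; simpa using hh'
    · have hg' : conjTr (⇑σ) g * J * g = J := hg; simpa using hg'
  · -- (iii) double coset condition
    rintro ⟨z, h, g⟩ ⟨hz, c, hc, hnorm, hh, hg⟩ ⟨z', h', g'⟩ ⟨hz', c', hc', hnorm', hh', hg'⟩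
    constructor
    · rintro ⟨⟨w, k⟩, ⟨hw, d, hd, hnq, hk⟩, ⟨w', k'⟩, ⟨hw', d', hd', hnq', hk'⟩, heq⟩
      refine ⟨w⁻¹ • k, unitary_of_sim σ Jb hw hnq hk,
        w'⁻¹ • k', unitary_of_sim σ Jb hw' hnq' hk', ?_⟩
      rw [heq]
      refine Prod.ext ?_ ?_
      · show (w * z * w')⁻¹ • (k * h * k') = (w⁻¹ • k) * (z⁻¹ • h) * (w'⁻¹ • k')
        simp only [smul_mul_assoc, mul_smul_comm, smul_smul, mul_inv]
        congr 1
        ring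
      · show (w * z * w')⁻¹ • (diagBlock k w * g * diagBlock k' w') =
          diagBlock (w⁻¹ • k) 1 * (z⁻¹ • g) * diagBlock (w'⁻¹ • k') 1
        rw [show diagBlock (w⁻¹ • k) 1 = w⁻¹ • diagBlock k w by
              rw [smul_diagBlock, inv_mul_cancel₀ hw],
            show diagBlock (w'⁻¹ • k') 1 = w'⁻¹ • diagBlock k' w' by
              rw [smul_diagBlock, inv_mul_cancel₀ hw']]
        simp only [smul_mul_assoc, mul_smul_comm, smul_smul, mul_inv]
        congr 1
        ring
    · rintro ⟨a, ha, a', ha', hEq⟩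
      have ha2 : conjTr (⇑σ) a * Jb * a = Jb := ha
      have ha2' : conjTr (⇑σ) a' * Jb * a' = Jb := ha'
      have hEq1 : z'⁻¹ • h' = a * (z⁻¹ • h) * a' := congrArg Prod.fst hEq
      have hEq2 : z'⁻¹ • g' = diagBlock a 1 * (z⁻¹ • g) * diagBlock a' 1 :=
        congrArg Prod.snd hEq
      refine ⟨(z' / z, (z' / z) • a), ⟨div_ne_zero hz' hz, c' / c, div_ne_zero hc' hc,
        normDiv z z' c c' hz hnorm hnorm' hc,
        simDiv Jb a z z' c c' hz hnorm hnorm' hc ha2⟩,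
        (1, a'), ⟨one_ne_zero, 1, one_ne_zero, by simp, by simpa using ha2'⟩, ?_⟩
      have k2 : h' = z' • (a * (z⁻¹ • h) * a') := smul_eq_of_inv_smul_eq hz' hEq1
      have k3 : g' = z' • (diagBlock a 1 * (z⁻¹ • g) * diagBlock a' 1) :=
        smul_eq_of_inv_smul_eq hz' hEq2
      refine Prod.ext ?_ (Prod.ext ?_ ?_)
      · show z' = z' / z * z * 1
        field_simp
      · show h' = ((z' / z) • a) * h * a'
        rw [k2]
        simp only [smul_mul_assoc, mul_smul_comm, smul_smul]
        congr 1
        field_simp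
      · show g' = diagBlock ((z' / z) • a) (z' / z) * g * diagBlock a' 1
        rw [k3, show diagBlock ((z' / z) • a) (z' / z) = (z' / z) • diagBlock a 1 by
              rw [smul_diagBlock, mul_one]]
        simp only [smul_mul_assoc, mul_smul_comm, smul_smul]
        congr 1
        field_simp
end

section
/- Algebraic form of Lemma B.1 (triviality of the banal local model): let R be a commutative ring, n ≥ 1, and let Q_A, Q_B ∈ R[T] be monic polynomials, with d := deg Q_A. Let M := (R[T]/(Q_A·Q_B))^n as an R[T]-module, and let P be an R[T]-module which is finite and free as an R-module, together with a surjective R[T]-linear map q : M → P. Assume: (Eisenstein condition) Q_A(t)·P = 0, where t denotes the R-linear action of T on P; and (Kottwitz condition) the characteristic polynomial of the R-linear endomorphism t of P equals Q_A^n. Then ker q = Q_A·M; equivalently, the induced surjection (R[T]/(Q_A))^n → P is an isomorphism of R[T]-modules. In particular, the quotient P is uniquely determined by these two conditions. -/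
open Polynomial

/-- The `R`-linear endomorphism `t` of an `R[T]`-module `P` given by the action of the
variable `T`. -/
noncomputable def tAction (R : Type*) [CommRing R] (P : Type*) [AddCommGroup P]
    [Module R P] [Module (Polynomial R) P] [IsScalarTower R (Polynomial R) P] :
    P →ₗ[R] P where
  toFun p := (X : Polynomial R) • p
  map_add' p p' := smul_add _ p p'
  map_smul' r p := (smul_comm r (X : Polynomial R) p).symm

/-- algebraic form of Lemma B.1 of the paper: triviality of the banal
local model. Let `R` be a commutative ring, `n ≥ 1`, and let `Q_A, Q_B ∈ R[T]` be monic
polynomials. Let `M := (R[T]/(Q_A Q_B))^n` as an `R[T]`-module, and let `P` be an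
`R[T]`-module which is finite and free as an `R`-module, together with a surjective
`R[T]`-linear map `q : M → P`. Assume the **Eisenstein condition** `Q_A(t) • P = 0` (where
`t` is the action of `T` on `P`) and the **Kottwitz condition** that the characteristic
polynomial of the `R`-linear endomorphism `t` of `P` equals `Q_A ^ n`. Then
`ker q = Q_A · M`; in particular the quotient `P` is uniquely determined by these two
conditions. -/
theorem banal_local_model_trivial
    (R : Type*) [CommRing R] (n : ℕ) (hn : 1 ≤ n)
    (Qa Qb : Polynomial R) (hQa : Qa.Monic) (hQb : Qb.Monic)
    (P : Type*) [AddCommGroup P] [Module R P] [Module (Polynomial R) P]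
    [IsScalarTower R (Polynomial R) P]
    -- `P` is finite and free as an `R`-module
    [Module.Finite R P] [Module.Free R P]
    -- the surjection `q : M = (R[T]/(Q_A·Q_B))^n → P`
    (q : (Fin n → Polynomial R ⧸ Ideal.span {Qa * Qb}) →ₗ[Polynomial R] P)
    (hq : Function.Surjective q)
    -- the Eisenstein condition
    (hEis : ∀ p : P, Qa • p = 0)
    -- the Kottwitz condition
    (hKott : LinearMap.charpoly (tAction R P) = Qa ^ n) :
    ∀ m : Fin n → Polynomial R ⧸ Ideal.span {Qa * Qb},
      q m = 0 ↔ ∃ m' : Fin n → Polynomial R ⧸ Ideal.span {Qa * Qb}, m = Qa • m' := by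
  have hback : ∀ m, (∃ m' : Fin n → Polynomial R ⧸ Ideal.span {Qa * Qb}, m = Qa • m') →
      q m = 0 := by
    rintro m ⟨m', rfl⟩
    rw [map_smul]
    exact hEis _
  rcases subsingleton_or_nontrivial R with hR | hR
  · haveI : Subsingleton (Polynomial R) := Module.subsingleton R _
    haveI : Subsingleton (Polynomial R ⧸ Ideal.span {Qa * Qb}) :=
      Module.subsingleton (Polynomial R) _
    intro m
    exact ⟨fun _ => ⟨0, Subsingleton.elim _ _⟩, hback m⟩
  -- nontrivial case
  have hIJ : Ideal.span {Qa * Qb} ≤ Ideal.span {Qa} :=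
    Ideal.span_singleton_le_span_singleton.mpr ⟨Qb, rfl⟩
  -- the projection π2
  set π2 : (Polynomial R ⧸ Ideal.span {Qa * Qb}) →ₗ[Polynomial R] (Polynomial R ⧸ Ideal.span {Qa}) :=
    Submodule.mapQ (Ideal.span {Qa * Qb}) (Ideal.span {Qa}) LinearMap.id hIJ with hπ2
  have hπ2mk : ∀ g : Polynomial R, π2 (Submodule.Quotient.mk g) = Submodule.Quotient.mk g :=
    fun g => rfl
  set Pr : (Fin n → Polynomial R ⧸ Ideal.span {Qa * Qb}) →ₗ[Polynomial R] (Fin n → Polynomial R ⧸ Ideal.span {Qa}) :=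
    LinearMap.pi (fun i => π2 ∘ₗ LinearMap.proj i) with hPrdef
  have hPrapp : ∀ m i, Pr m i = π2 (m i) := fun m i => rfl
  have hPrsurj : Function.Surjective Pr := by
    intro y
    choose g hg using fun i => Submodule.Quotient.mk_surjective _ (y i)
    exact ⟨fun i => Submodule.Quotient.mk (g i), funext fun i => by
      rw [hPrapp, hπ2mk, hg]⟩
  have hker1 : ∀ x : Polynomial R ⧸ Ideal.span {Qa * Qb}, π2 x = 0 ↔ ∃ y, x = Qa • y := by
    intro x
    obtain ⟨g, rfl⟩ := Submodule.Quotient.mk_surjective _ x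
    constructor
    · intro h
      rw [hπ2mk] at h
      have : g ∈ Ideal.span {Qa} := (Submodule.Quotient.mk_eq_zero _).mp h
      obtain ⟨h', rfl⟩ := Ideal.mem_span_singleton.mp this
      exact ⟨Submodule.Quotient.mk h', by
        rw [← Submodule.Quotient.mk_smul, smul_eq_mul]⟩
    · rintro ⟨y, hy⟩
      obtain ⟨z, rfl⟩ := Submodule.Quotient.mk_surjective _ y
      rw [hy, map_smul, hπ2mk]
      rw [← Submodule.Quotient.mk_smul, smul_eq_mul, Submodule.Quotient.mk_eq_zero]
      exact Ideal.mem_span_singleton.mpr (dvd_mul_right _ _)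
  have hkerPr : ∀ m, Pr m = 0 ↔ ∃ m', m = Qa • m' := by
    intro m
    constructor
    · intro h
      have h' : ∀ i, ∃ y, m i = Qa • y := fun i =>
        (hker1 (m i)).mp (by rw [← hPrapp, h]; rfl)
      choose y hy using h'
      exact ⟨y, funext fun i => hy i⟩
    · rintro ⟨m', rfl⟩
      funext i
      rw [hPrapp]
      exact ((hker1 _).mpr ⟨m' i, rfl⟩)
  have hle : LinearMap.ker Pr ≤ LinearMap.ker q := by
    intro m hm
    exact LinearMap.mem_ker.mpr (hback m ((hkerPr m).mp (LinearMap.mem_ker.mp hm)))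
  -- factor q through Pr
  set e := Pr.quotKerEquivOfSurjective hPrsurj with he
  set l : ((Fin n → Polynomial R ⧸ Ideal.span {Qa * Qb}) ⧸ LinearMap.ker Pr) →ₗ[Polynomial R] P :=
    Submodule.liftQ _ q hle with hl
  set qbar : (Fin n → Polynomial R ⧸ Ideal.span {Qa}) →ₗ[Polynomial R] P := l ∘ₗ e.symm.toLinearMap
    with hqbar
  have hfac : ∀ m, qbar (Pr m) = q m := by
    intro m
    have h1 : e (Submodule.Quotient.mk m) = Pr m := rfl
    have h2 : e.symm (Pr m) = Submodule.Quotient.mk m := by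
      rw [← h1, LinearEquiv.symm_apply_apply]
    simp only [hqbar, LinearMap.coe_comp, Function.comp_apply, LinearEquiv.coe_toLinearMap,
      h2, hl, Submodule.liftQ_apply]
  have hqbarsurj : Function.Surjective qbar := by
    intro p
    obtain ⟨m, rfl⟩ := hq p
    exact ⟨Pr m, hfac m⟩
  -- rank computations
  have hfr : Module.finrank R P = n * Qa.natDegree := by
    rw [← LinearMap.charpoly_natDegree (tAction R P), hKott, hQa.natDegree_pow]
  -- basis for Polynomial R ⧸ Ideal.span {Qa}
  let bJ : Module.Basis (Fin Qa.natDegree) R (Polynomial R ⧸ Ideal.span {Qa}) :=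
    (AdjoinRoot.powerBasis' hQa).basis
  let bN : Module.Basis ((_ : Fin n) × Fin Qa.natDegree) R
      (Fin n → Polynomial R ⧸ Ideal.span {Qa}) :=
    Pi.basis (fun _ : Fin n => bJ)
  let bP : Module.Basis (Fin (Module.finrank R P)) R P := Module.finBasis R P
  let iso : (Fin n → Polynomial R ⧸ Ideal.span {Qa}) ≃ₗ[R] P :=
    bN.equiv bP ((Equiv.sigmaEquivProd (Fin n) (Fin Qa.natDegree)).trans
      ((finProdFinEquiv).trans (finCongr hfr.symm)))
  have hinj : Function.Injective (qbar.restrictScalars R) :=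
    OrzechProperty.injective_of_surjective_of_injective iso.toLinearMap
      (qbar.restrictScalars R) iso.injective hqbarsurj
  intro m
  refine ⟨fun hm => ?_, hback m⟩
  have h0 : Pr m = 0 := by
    apply hinj
    show qbar (Pr m) = qbar.restrictScalars R 0
    rw [hfac, hm, map_zero]
  exact (hkerPr m).mp h0
end
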